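/- Let ε > 0 and define σ_ε : ℝ → ℝ by σ_ε(u) = exp(−(2/√u)·arctan(ε/√u)) for u > 0 and σ_ε(u) = 0 for u ≤ 0. Then σ_ε is C^∞ (infinitely differentiable) on all of ℝ. -/

import Mathlib

open Real Filter Set Topology

noncomputable def Xf (u : ℝ) : ℝ := (Real.sqrt u)⁻¹
noncomputable def Yf (ε u : ℝ) : ℝ := (u + ε ^ 2)⁻¹
noncomputable def Zf (ε u : ℝ) : ℝ := Real.arctan (ε * Xf u)
noncomputable def Ff (ε u : ℝ) : ℝ := if 0 < u then Real.exp (-(2 * Xf u * Zf ε u)) else 0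

structure Mn where
  c : ℝ
  i : ℕ
  j : ℕ
  k : ℕ

noncomputable def mono (ε : ℝ) (m : Mn) (u : ℝ) : ℝ :=
  m.c * Xf u ^ m.i * Yf ε u ^ m.j * Zf ε u ^ m.k * Ff ε u

noncomputable def Dm (ε : ℝ) (m : Mn) : List Mn :=
  [⟨-((m.i : ℝ) / 2) * m.c, m.i + 2, m.j, m.k⟩,
   ⟨-(m.j : ℝ) * m.c, m.i, m.j + 1, m.k⟩,
   ⟨-(ε * (m.k : ℝ) / 2) * m.c, m.i + 1, m.j + 1, m.k - 1⟩,
   ⟨m.c, m.i + 3, m.j, m.k + 1⟩,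
   ⟨ε * m.c, m.i + 2, m.j + 1, m.k⟩]

noncomputable def S (ε : ℝ) (l : List Mn) (u : ℝ) : ℝ := (l.map fun m => mono ε m u).sum

lemma Ff_nonpos {ε u : ℝ} (hu : u ≤ 0) : Ff ε u = 0 := if_neg (not_lt.2 hu)

lemma mono_nonpos {ε : ℝ} (m : Mn) {u : ℝ} (hu : u ≤ 0) : mono ε m u = 0 := by
  simp [mono, Ff_nonpos hu]

lemma tendsto_pow_exp_c (i : ℕ) {c : ℝ} (hc : 0 < c) :
    Tendsto (fun t : ℝ => t ^ i * Real.exp (-(c * t))) atTop (𝓝 0) := by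
  have h1 : Tendsto (fun t : ℝ => c * t) atTop atTop :=
    tendsto_id.const_mul_atTop hc
  have h2 := (tendsto_pow_mul_exp_neg_atTop_nhds_zero i).comp h1
  have h3 := h2.const_mul ((c⁻¹) ^ i)
  rw [mul_zero] at h3
  refine h3.congr fun t => ?_
  simp only [Function.comp]
  rw [← mul_assoc, ← mul_pow, inv_mul_cancel_left₀ hc.ne']

lemma Xf_tendsto : Tendsto Xf (𝓝[>] (0:ℝ)) atTop := by
  apply tendsto_inv_nhdsGT_zero.comp
  apply tendsto_nhdsWithin_of_tendsto_nhds_of_eventually_within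
  · have : Tendsto Real.sqrt (𝓝 0) (𝓝 0) := by
      simpa using Real.continuous_sqrt.tendsto 0
    exact this.mono_left nhdsWithin_le_nhds
  · filter_upwards [self_mem_nhdsWithin] with u (hu : 0 < u)
    exact Real.sqrt_pos.2 hu

lemma Ff_nonneg (ε u : ℝ) : 0 ≤ Ff ε u := by
  unfold Ff; split <;> positivity

lemma Xf_nonneg (u : ℝ) : 0 ≤ Xf u := by
  unfold Xf; positivity

lemma Ff_le {ε : ℝ} (hε : 0 < ε) {u : ℝ} (h0 : 0 < u) (h1 : u < ε ^ 2) :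
    Ff ε u ≤ Real.exp (-(Real.pi / 2 * Xf u)) := by
  rw [Ff, if_pos h0]
  apply Real.exp_le_exp.2
  rw [neg_le_neg_iff]
  have hX : 0 < Xf u := inv_pos.2 (Real.sqrt_pos.2 h0)
  have hs : Real.sqrt u < ε := by
    have := Real.sqrt_lt_sqrt h0.le h1
    rwa [Real.sqrt_sq hε.le] at this
  have h4 : Real.pi / 4 ≤ Zf ε u := by
    rw [Zf, ← Real.arctan_one]
    apply Real.arctan_strictMono.monotone
    rw [Xf, ← div_eq_mul_inv, le_div_iff₀ (Real.sqrt_pos.2 h0), one_mul]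
    exact hs.le
  calc Real.pi / 2 * Xf u = 2 * Xf u * (Real.pi / 4) := by ring
  _ ≤ 2 * Xf u * Zf ε u := by
      apply mul_le_mul_of_nonneg_left h4 (by positivity)

lemma mono_tendsto {ε : ℝ} (hε : 0 < ε) (m : Mn) :
    Tendsto (mono ε m) (𝓝 0) (𝓝 0) := by
  nth_rewrite 1 [← nhdsLE_sup_nhdsGT (0:ℝ)]
  rw [tendsto_sup]
  constructor
  · refine Tendsto.congr' ?_ tendsto_const_nhds
    filter_upwards [self_mem_nhdsWithin] with u (hu : u ≤ 0)
    exact (mono_nonpos m hu).symm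
  · set C : ℝ := |m.c| * ((ε ^ 2)⁻¹) ^ m.j * (Real.pi / 2) ^ m.k with hC
    have hg : Tendsto (fun u => C * (Xf u ^ m.i * Real.exp (-(Real.pi / 2 * Xf u))))
        (𝓝[>] (0:ℝ)) (𝓝 0) := by
      have := ((tendsto_pow_exp_c m.i (by positivity : (0:ℝ) < Real.pi / 2)).comp
        Xf_tendsto).const_mul C
      rw [mul_zero] at this
      exact this.congr fun u => by simp [Function.comp]
    apply squeeze_zero_norm' _ hg
    filter_upwards [Ioo_mem_nhdsGT_of_mem (Set.left_mem_Ico.2 (by positivity : (0:ℝ) < ε ^ 2))]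
      with u hu
    obtain ⟨hu0, hu1⟩ := hu
    have hXn := Xf_nonneg u
    have hZ : |Zf ε u| ≤ Real.pi / 2 := le_of_lt (by rw [abs_lt]; exact ⟨Real.neg_pi_div_two_lt_arctan _, Real.arctan_lt_pi_div_two _⟩)
    have hY : |Yf ε u| ≤ (ε ^ 2)⁻¹ := by
      rw [Yf, abs_of_pos (by positivity)]
      exact inv_anti₀ (by positivity) (by linarith)
    have hF : |Ff ε u| ≤ Real.exp (-(Real.pi / 2 * Xf u)) := by
      rw [abs_of_nonneg (Ff_nonneg ε u)]; exact Ff_le hε hu0 hu1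
    rw [Real.norm_eq_abs, mono]
    calc |m.c * Xf u ^ m.i * Yf ε u ^ m.j * Zf ε u ^ m.k * Ff ε u|
        = |m.c| * Xf u ^ m.i * |Yf ε u| ^ m.j * |Zf ε u| ^ m.k * |Ff ε u| := by
          rw [abs_mul, abs_mul, abs_mul, abs_mul, abs_pow, abs_pow, abs_pow,
            abs_of_nonneg hXn]
      _ ≤ C * (Xf u ^ m.i * Real.exp (-(Real.pi / 2 * Xf u))) := by
          rw [hC]
          have h1 : |Yf ε u| ^ m.j ≤ ((ε ^ 2)⁻¹) ^ m.j :=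
            pow_le_pow_left₀ (abs_nonneg _) hY _
          have h2 : |Zf ε u| ^ m.k ≤ (Real.pi / 2) ^ m.k :=
            pow_le_pow_left₀ (abs_nonneg _) hZ _
          have := mul_le_mul (mul_le_mul (mul_le_mul_of_nonneg_left h1
            (by positivity : (0:ℝ) ≤ |m.c| * Xf u ^ m.i)) h2 (by positivity)
            (by positivity)) hF (abs_nonneg _) (by positivity)
          calc |m.c| * Xf u ^ m.i * |Yf ε u| ^ m.j * |Zf ε u| ^ m.k * |Ff ε u|
              ≤ |m.c| * Xf u ^ m.i * ((ε^2)⁻¹) ^ m.j * (Real.pi/2) ^ m.k *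
                Real.exp (-(Real.pi / 2 * Xf u)) := this
            _ = |m.c| * ((ε^2)⁻¹) ^ m.j * (Real.pi/2) ^ m.k *
                (Xf u ^ m.i * Real.exp (-(Real.pi / 2 * Xf u))) := by ring

lemma Xf_hasDeriv {u : ℝ} (hu : 0 < u) : HasDerivAt Xf (-(1/2) * Xf u ^ 3) u := by
  obtain ⟨s, hs0, rfl⟩ : ∃ s : ℝ, 0 < s ∧ s ^ 2 = u :=
    ⟨Real.sqrt u, Real.sqrt_pos.2 hu, Real.sq_sqrt hu.le⟩
  have hss : Real.sqrt (s ^ 2) = s := Real.sqrt_sq hs0.le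
  have h := (Real.hasDerivAt_sqrt (show (s ^ 2 : ℝ) ≠ 0 by positivity)).inv
    (by rw [hss]; exact hs0.ne')
  refine h.congr_deriv (Eq.symm ?_)
  rw [Xf, hss]
  field_simp

lemma Yf_hasDeriv {ε u : ℝ} (hε : 0 < ε) (hu : 0 < u) :
    HasDerivAt (Yf ε) (-(Yf ε u ^ 2)) u := by
  have h := ((hasDerivAt_id u).add_const (ε ^ 2)).inv (by positivity)
  refine h.congr_deriv (Eq.symm ?_)
  rw [Yf]
  simp only [id]
  field_simp

lemma Zf_hasDeriv {ε u : ℝ} (hε : 0 < ε) (hu : 0 < u) :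
    HasDerivAt (Zf ε) (-(ε / 2) * (Xf u * Yf ε u)) u := by
  have hX := (Xf_hasDeriv hu).const_mul ε
  have h := (Real.hasDerivAt_arctan (ε * Xf u)).comp u hX
  refine h.congr_deriv (Eq.symm ?_)
  obtain ⟨s, hs0, rfl⟩ : ∃ s : ℝ, 0 < s ∧ s ^ 2 = u :=
    ⟨Real.sqrt u, Real.sqrt_pos.2 hu, Real.sq_sqrt hu.le⟩
  have hss : Real.sqrt (s ^ 2) = s := Real.sqrt_sq hs0.le
  rw [Xf, Yf, hss]
  have h2 : 1 + (ε * s⁻¹) ^ 2 ≠ 0 := by positivity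
  field_simp

lemma Ff_hasDeriv {ε u : ℝ} (hε : 0 < ε) (hu : 0 < u) :
    HasDerivAt (Ff ε) ((Xf u ^ 3 * Zf ε u + ε * Xf u ^ 2 * Yf ε u) * Ff ε u) u := by
  have hX := Xf_hasDeriv hu
  have hZ := Zf_hasDeriv hε hu
  have h := (((hX.const_mul 2).mul hZ).neg).exp
  have heq : (fun y => Real.exp (-(2 * Xf y * Zf ε y))) =ᶠ[𝓝 u] Ff ε := by
    filter_upwards [lt_mem_nhds hu] with y hy
    rw [Ff, if_pos hy]
  have h2 := h.congr_of_eventuallyEq heq.symm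
  refine h2.congr_deriv (Eq.symm ?_)
  rw [Ff, if_pos hu]
  simp only [Pi.neg_apply, Pi.mul_apply]
  ring

lemma mono_hasDerivAt {ε : ℝ} (hε : 0 < ε) (m : Mn) (u : ℝ) :
    HasDerivAt (mono ε m) (S ε (Dm ε m) u) u := by
  rcases lt_trichotomy u 0 with hu | rfl | hu
  · have hz : S ε (Dm ε m) u = 0 := by
      simp [S, Dm, mono, Ff_nonpos hu.le]
    rw [hz]
    refine (hasDerivAt_const u 0).congr_of_eventuallyEq ?_
    filter_upwards [gt_mem_nhds hu] with y hy
    exact mono_nonpos m hy.le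
  · have hz : S ε (Dm ε m) 0 = 0 := by
      simp [S, Dm, mono, Ff_nonpos le_rfl]
    rw [hz, hasDerivAt_iff_tendsto_slope]
    refine ((mono_tendsto hε ⟨m.c, m.i + 2, m.j, m.k⟩).mono_left inf_le_left).congr fun y => ?_
    rcases lt_trichotomy y 0 with hy | rfl | hy
    · rw [mono_nonpos _ hy.le, slope_def_field, mono_nonpos _ le_rfl,
        mono_nonpos _ hy.le]
      simp
    · rw [slope_def_field, mono_nonpos _ le_rfl]
      simp [mono_nonpos _ le_rfl]
    · rw [slope_def_field, mono_nonpos _ le_rfl, sub_zero, sub_zero, mono, mono]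
      obtain ⟨s, hs0, rfl⟩ : ∃ s : ℝ, 0 < s ∧ s ^ 2 = y :=
        ⟨Real.sqrt y, Real.sqrt_pos.2 hy, Real.sq_sqrt hy.le⟩
      have hss : Real.sqrt (s ^ 2) = s := Real.sqrt_sq hs0.le
      simp only [Xf, hss, pow_add]
      field_simp
      try ring
  · have hX := Xf_hasDeriv hu
    have hY := Yf_hasDeriv hε hu
    have hZ := Zf_hasDeriv hε hu
    have hF := Ff_hasDeriv hε hu
    have h := ((((hX.pow m.i).const_mul m.c).mul (hY.pow m.j)).mul (hZ.pow m.k)).mul hF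
    refine h.congr_deriv (Eq.symm ?_)
    obtain ⟨c, i, j, k⟩ := m
    simp only [S, Dm, mono, List.map_cons, List.map_nil, List.sum_cons, List.sum_nil]
    cases i <;> cases j <;> cases k <;>
      · simp only [Nat.succ_sub_one, Nat.zero_sub, Nat.sub_zero, Pi.mul_apply, Pi.pow_apply]
        push_cast
        ring

lemma S_hasDerivAt {ε : ℝ} (hε : 0 < ε) (l : List Mn) (u : ℝ) :
    HasDerivAt (S ε l) (S ε (l.flatMap (Dm ε)) u) u := by
  induction l with
  | nil =>
    simp only [S, List.map_nil, List.sum_nil, List.flatMap_nil]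
    exact hasDerivAt_const u 0
  | cons m l ih =>
    have h := (mono_hasDerivAt hε m u).add ih
    have e1 : S ε (m :: l) = fun y => mono ε m y + S ε l y := by
      funext y; simp [S]
    have e2 : S ε ((m :: l).flatMap (Dm ε)) u = S ε (Dm ε m) u + S ε (l.flatMap (Dm ε)) u := by
      simp [S, List.flatMap_cons]
    rw [e1, e2]
    exact h

lemma contDiff_S {ε : ℝ} (hε : 0 < ε) :
    ∀ (n : ℕ) (l : List Mn), ContDiff ℝ (n : WithTop ℕ∞) (S ε l) := by
  intro n
  induction n with
  | zero =>
    intro l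
    have hd : Differentiable ℝ (S ε l) := fun u => (S_hasDerivAt hε l u).differentiableAt
    exact contDiff_zero.2 hd.continuous
  | succ n ih =>
    intro l
    rw [show ((n + 1 : ℕ) : WithTop ℕ∞) = (n : ℕ) + 1 from rfl]
    refine contDiff_succ_iff_deriv.2
      ⟨fun u => (S_hasDerivAt hε l u).differentiableAt, by simp, ?_⟩
    have hder : deriv (S ε l) = S ε (l.flatMap (Dm ε)) := by
      funext u; exact (S_hasDerivAt hε l u).deriv
    rw [hder]
    exact ih _

/-- For `ε > 0`, the function `σ_ε : ℝ → ℝ` with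
`σ_ε(u) = exp(−(2/√u)·arctan(ε/√u))` for `u > 0` and `σ_ε(u) = 0` for `u ≤ 0`
is `C^∞` on all of `ℝ`. -/
theorem stmt9 (ε : ℝ) (hε : 0 < ε) :
    ContDiff ℝ (⊤ : ℕ∞)
      (fun u : ℝ =>
        if 0 < u then Real.exp (-(2 / Real.sqrt u * Real.arctan (ε / Real.sqrt u)))
        else 0) := by
  have key : ContDiff ℝ (⊤ : ℕ∞) (S ε [⟨1, 0, 0, 0⟩]) :=
    contDiff_infty.2 fun n => contDiff_S hε n _
  have heq : (fun u : ℝ =>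
        if 0 < u then Real.exp (-(2 / Real.sqrt u * Real.arctan (ε / Real.sqrt u)))
        else 0) = S ε [⟨1, 0, 0, 0⟩] := by
    funext u
    simp only [S, mono, List.map_cons, List.map_nil, List.sum_cons, List.sum_nil,
      pow_zero, mul_one, one_mul, add_zero, Ff, Xf, Zf, div_eq_mul_inv]
  rw [heq]
  exact key
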